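/- Let $X$ be a compact metric space and let $\psi : X \to [0,1]$ be a continuous map satisfying: for every continuum $F \subseteq X$ with $\psi(F)$ not a singleton, there is a dense subset $D \subseteq \psi(F)$ such that for every $d \in D$, the set $\psi^{-1}(d) \cap F$ is a union of components of $\psi^{-1}(d)$. Then $\psi$ is a Krasinkiewicz map, i.e., every continuum in $X$ either contains a component of a fiber of $\psi$ or is contained in a component of a fiber of $\psi$. -/
import Mathlib


open Set Metric

/-- A map is Krasinkiewicz if every continuum in `X` either contains a connected
component of a fiber or is contained in a connected component of a fiber. -/
def IsKrasinkiewicz {X Y : Type*} [TopologicalSpace X] [TopologicalSpace Y] (f : X → Y) : Prop :=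
  ∀ F : Set X, IsCompact F → IsConnected F →
    (∃ x : X, connectedComponentIn (f ⁻¹' {f x}) x ⊆ F) ∨
    (∃ x : X, F ⊆ connectedComponentIn (f ⁻¹' {f x}) x)

theorem starCond_implies_krasinkiewicz {X : Type*} [MetricSpace X] [CompactSpace X]
    (ψ : C(X, unitInterval))
    (hψ : ∀ F : Set X, IsCompact F → IsConnected F → ¬ (⇑ψ '' F).Subsingleton →
      ∃ D ⊆ ⇑ψ '' F, ⇑ψ '' F ⊆ closure D ∧
        ∀ d ∈ D, ∀ x ∈ ⇑ψ ⁻¹' {d} ∩ F, connectedComponentIn (⇑ψ ⁻¹' {d}) x ⊆ F) :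
    IsKrasinkiewicz ⇑ψ := by
  intro F hFc hFconn
  by_cases h : (⇑ψ '' F).Subsingleton
  · right
    obtain ⟨x, hx⟩ := hFconn.nonempty
    refine ⟨x, ?_⟩
    have hsub : F ⊆ ⇑ψ ⁻¹' {ψ x} := fun y hy =>
      h (mem_image_of_mem _ hy) (mem_image_of_mem _ hx)
    exact hFconn.isPreconnected.subset_connectedComponentIn hx hsub
  · left
    obtain ⟨D, hD, hdense, hcomp⟩ := hψ F hFc hFconn h
    have hDne : D.Nonempty := by
      rcases hFconn.nonempty with ⟨x, hx⟩
      by_contra hne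
      rw [not_nonempty_iff_eq_empty] at hne
      have := hdense (mem_image_of_mem _ hx)
      simp [hne] at this
    obtain ⟨d, hd⟩ := hDne
    obtain ⟨x, hxF, hxd⟩ := hD hd
    refine ⟨x, ?_⟩
    have := hcomp d hd x ⟨by simp [hxd], hxF⟩
    rw [hxd]; exact this
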